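/- The Thue–Morse sequence is overlap-free: there is no letter a, word X, and position j such that aXaXa occurs as a factor of the Thue–Morse sequence. -/

import Mathlib

open Fin.NatCast in
/-- The Thue–Morse sequence. -/
def t (i : ℕ) : Fin 2 := ((Nat.digits 2 i).count 1 : Fin 2)

/-- The word `X` occurs in the Thue–Morse sequence at position `j`. -/
def OccursAt (X : List (Fin 2)) (j : ℕ) : Prop :=
  ∀ m, m < X.length → X.getD m 0 = t (j + m)

lemma t_even (a : ℕ) : t (2 * a) = t a := by
  rcases Nat.eq_zero_or_pos a with h | h
  · simp [h]
  · unfold t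
    rw [Nat.digits_def' (by norm_num : 1 < 2) (by omega)]
    simp [Nat.mul_div_cancel_left, List.count_cons]

lemma t_odd (a : ℕ) : t (2 * a + 1) = t a + 1 := by
  unfold t
  rw [Nat.digits_def' (by norm_num : 1 < 2) (by omega)]
  have h1 : (2 * a + 1) % 2 = 1 := by omega
  have h2 : (2 * a + 1) / 2 = a := by omega
  rw [h1, h2]
  simp [List.count_cons]
  exact Fin.ext (by simp only [Fin.val_natCast, Fin.val_add, Fin.val_one]; omega)

lemma noTriple (m : ℕ) : ¬ (t m = t (m+1) ∧ t (m+1) = t (m+2)) := by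
  rcases Nat.even_or_odd m with ⟨b, hb⟩ | ⟨b, hb⟩
  · have h1 : t m = t b := by rw [show m = 2*b by omega, t_even]
    have h2 : t (m+1) = t b + 1 := by rw [show m+1 = 2*b+1 by omega, t_odd]
    rintro ⟨h, -⟩
    rw [h1, h2] at h
    revert h; generalize t b = u; fin_cases u <;> decide
  · have h1 : t (m+1) = t (b+1) := by rw [show m+1 = 2*(b+1) by omega, t_even]
    have h2 : t (m+2) = t (b+1) + 1 := by rw [show m+2 = 2*(b+1)+1 by omega, t_odd]
    rintro ⟨-, h⟩
    rw [h1, h2] at h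
    revert h; generalize t (b+1) = u; fin_cases u <;> decide

lemma fin2_cancel : ∀ u v w : Fin 2, u = v + 1 → u + 1 = w → v = w := by decide

lemma pair_even (k a : ℕ) (h1 : t (2*a) = t (2*a + (2*k+1)))
    (h2 : t (2*a+1) = t (2*a+1+(2*k+1))) : t (a+k) = t (a+k+1) := by
  rw [t_even, show 2*a + (2*k+1) = 2*(a+k)+1 by omega, t_odd] at h1
  rw [t_odd, show 2*a+1+(2*k+1) = 2*(a+k+1) by omega, t_even] at h2
  exact fin2_cancel _ _ _ h1 h2

lemma pair_odd (k a : ℕ) (h1 : t (2*a+1) = t (2*a+1+(2*k+1)))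
    (h2 : t (2*a+2) = t (2*a+2+(2*k+1))) : t a = t (a+1) := by
  rw [t_odd, show 2*a+1+(2*k+1) = 2*(a+k+1) by omega, t_even] at h1
  rw [show 2*a+2 = 2*(a+1) by omega, t_even,
      show 2*(a+1)+(2*k+1) = 2*(a+k+1)+1 by omega, t_odd] at h2
  exact fin2_cancel _ _ _ h1.symm h2.symm

lemma key : ∀ n, 1 ≤ n → ∀ j, ¬ (∀ i ≤ n, t (j + i) = t (j + i + n)) := by
  intro n
  induction n using Nat.strong_induction_on with
  | _ n ih =>
    intro hn j h
    rcases Nat.even_or_odd n with ⟨m, hm⟩ | ⟨k, hk⟩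
    · -- n = 2m, even
      have hm1 : 1 ≤ m := by omega
      rcases Nat.even_or_odd j with ⟨b, hb⟩ | ⟨b, hb⟩
      · apply ih m (by omega) hm1 b
        intro c hc
        have hi := h (2*c) (by omega)
        rw [show j + 2*c = 2*(b+c) by omega,
            show 2*(b+c) + n = 2*(b+c+m) by omega, t_even, t_even] at hi
        convert hi using 2 <;> omega
      · apply ih m (by omega) hm1 b
        intro c hc
        have hi := h (2*c) (by omega)
        rw [show j + 2*c = 2*(b+c)+1 by omega,
            show 2*(b+c)+1 + n = 2*(b+c+m)+1 by omega, t_odd, t_odd] at hi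
        have := add_right_cancel hi
        convert this using 2 <;> omega
    · -- n = 2k+1, odd
      rcases Nat.eq_or_lt_of_le hn with h1 | h3
      · have e0 := h 0 (by omega)
        have e1 := h 1 (by omega)
        rw [Nat.add_zero, ← h1] at e0
        rw [← h1] at e1
        exact noTriple j ⟨e0, e1⟩
      · have hn3 : 3 ≤ n := by omega
        have h0 := h 0 (by omega)
        have h1 := h 1 (by omega)
        have h2 := h 2 (by omega)
        have h3' := h 3 (by omega)
        rcases Nat.even_or_odd j with ⟨a, ha⟩ | ⟨a, ha⟩
        · have p1 := pair_even k a (by convert h0 using 2 <;> omega)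
            (by convert h1 using 2 <;> omega)
          have p2 := pair_even k (a+1) (by convert h2 using 2 <;> omega)
            (by convert h3' using 2 <;> omega)
          refine noTriple (a+k) ⟨p1, ?_⟩
          convert p2 using 2 <;> omega
        · have p1 := pair_odd k a (by convert h0 using 2 <;> omega)
            (by convert h1 using 2 <;> omega)
          have p2 := pair_odd k (a+1) (by convert h2 using 2 <;> omega)
            (by convert h3' using 2 <;> omega)
          refine noTriple a ⟨p1, ?_⟩
          convert p2 using 2 <;> omega


theorem thue_morse_overlap_free :
    ¬ ∃ (a : Fin 2) (X : List (Fin 2)) (j : ℕ),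
        OccursAt ([a] ++ X ++ [a] ++ X ++ [a]) j := by
  rintro ⟨a, X, j, hocc⟩
  set P : List (Fin 2) := a :: X with hP
  set n : ℕ := P.length with hn
  have hn1 : 1 ≤ n := by simp [hn, hP]
  have hW : [a] ++ X ++ [a] ++ X ++ [a] = P ++ (P ++ [a]) := by
    simp [hP]
  have hlen : ([a] ++ X ++ [a] ++ X ++ [a]).length = 2 * n + 1 := by
    simp [hP, hn]; omega
  -- getD of W at i equals (P ++ [a]).getD i for all i ≤ n
  have hA : ∀ i ≤ n, ([a] ++ X ++ [a] ++ X ++ [a]).getD i 0 = (P ++ [a]).getD i 0 := by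
    intro i hi
    rw [hW]
    rcases Nat.lt_or_ge i n with h | h
    · rw [List.getD_append _ _ _ _ (by simpa [← hn] using h),
          List.getD_append _ _ _ _ (by simpa [← hn] using h)]
    · have hieq : i = n := le_antisymm hi h
      subst hieq
      rw [List.getD_append_right _ _ _ _ (le_refl _), Nat.sub_self,
          List.getD_append _ _ _ _ (by simp [hP]),
          List.getD_append_right _ _ _ _ (le_refl _), Nat.sub_self]
      simp [hP]
  have hB : ∀ i ≤ n, ([a] ++ X ++ [a] ++ X ++ [a]).getD (n + i) 0 = (P ++ [a]).getD i 0 := by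
    intro i hi
    rw [hW, List.getD_append_right _ _ _ _ (by omega)]
    congr 1
    omega
  apply key n hn1 j
  intro i hi
  have e1 := hocc i (by omega)
  have e2 := hocc (n + i) (by omega)
  rw [hA i hi] at e1
  rw [hB i hi] at e2
  exact e1.symm.trans (e2.trans (by rw [show j+(n+i) = j+i+n from by omega]))
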